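/- Let F : ℝ² → ℝ² be twice continuously differentiable with det(DF(x̂)) > 0 for all x̂, where DF denotes the Fréchet derivative of F, and let u : ℝ² → ℝ² be continuously differentiable. Define the covariant Piola pullback û : ℝ² → ℝ² by û(x̂) = (DF(x̂))ᵀ u(F(x̂)). Then for every x̂ ∈ ℝ² the scalar curls satisfy (curl u)(F(x̂)) = (1 / det(DF(x̂))) · (curl û)(x̂), where for a vector field v = (v₁, v₂) the scalar curl is curl v = ∂₁ v₂ − ∂₂ v₁. -/

import Mathlib

/-- Jacobian matrix of a map `F : ℝ² → ℝ²` at a point. -/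
noncomputable def jacobian2 (F : (Fin 2 → ℝ) → (Fin 2 → ℝ)) (x : Fin 2 → ℝ) :
    Matrix (Fin 2) (Fin 2) ℝ :=
  Matrix.of fun i j => fderiv ℝ F x (Pi.single j 1) i

/-- Scalar curl of a planar vector field: curl v = ∂₁v₂ − ∂₂v₁. -/
noncomputable def scalarCurl (v : (Fin 2 → ℝ) → (Fin 2 → ℝ)) (x : Fin 2 → ℝ) : ℝ :=
  fderiv ℝ (fun y => v y 1) x (Pi.single 0 1) - fderiv ℝ (fun y => v y 0) x (Pi.single 1 1)

/-- Any continuous linear functional on ℝ² is determined by its values on the basis. -/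
lemma clm_eval_fin2 (L : (Fin 2 → ℝ) →L[ℝ] ℝ) (w : Fin 2 → ℝ) :
    L w = w 0 * L (Pi.single 0 1) + w 1 * L (Pi.single 1 1) := by
  have hw : w = w 0 • (Pi.single 0 1 : Fin 2 → ℝ) + w 1 • (Pi.single 1 1 : Fin 2 → ℝ) := by
    ext i; fin_cases i <;> simp [Pi.single_apply]
  conv_lhs => rw [hw]
  simp [map_add, map_smul]

/-- fderiv of a coordinate function. -/
lemma fderiv_coord {F : (Fin 2 → ℝ) → (Fin 2 → ℝ)} {x : Fin 2 → ℝ}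
    (hF : DifferentiableAt ℝ F x) (k : Fin 2) :
    fderiv ℝ (fun y => F y k) x
      = (ContinuousLinearMap.proj k : ((Fin 2 → ℝ)) →L[ℝ] ℝ).comp (fderiv ℝ F x) := by
  have h : HasFDerivAt (fun y => F y k)
      ((ContinuousLinearMap.proj k : ((Fin 2 → ℝ)) →L[ℝ] ℝ).comp (fderiv ℝ F x)) x :=
    (ContinuousLinearMap.proj k :
      ((Fin 2 → ℝ)) →L[ℝ] ℝ).hasFDerivAt.comp x hF.hasFDerivAt
  exact h.fderiv

theorem piola_curl_transform_2d
    (F : (Fin 2 → ℝ) → (Fin 2 → ℝ)) (hF : ContDiff ℝ 2 F)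
    (hdet : ∀ x : Fin 2 → ℝ, 0 < (jacobian2 F x).det)
    (u : (Fin 2 → ℝ) → (Fin 2 → ℝ)) (hu : ContDiff ℝ 1 u)
    (uhat : (Fin 2 → ℝ) → (Fin 2 → ℝ))
    (huhat : ∀ x : Fin 2 → ℝ, uhat x = (jacobian2 F x).transpose.mulVec (u (F x))) :
    ∀ x : Fin 2 → ℝ,
      scalarCurl u (F x) = (1 / (jacobian2 F x).det) * scalarCurl uhat x := by
  intro x
  set e : Fin 2 → (Fin 2 → ℝ) := fun j => Pi.single j 1 with he
  have hFd : Differentiable ℝ F := hF.differentiable (by norm_num)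
  have hud : Differentiable ℝ u := hu.differentiable (by norm_num)
  -- coordinate functions of F
  have hFk : ∀ k : Fin 2, ContDiff ℝ 2 (fun y => F y k) := fun k =>
    (ContinuousLinearMap.proj k : ((Fin 2 → ℝ)) →L[ℝ] ℝ).contDiff.comp hF
  have hFkd : ∀ k : Fin 2, Differentiable ℝ (fun y => F y k) := fun k =>
    (hFk k).differentiable (by norm_num)
  have hdFk : ∀ k : Fin 2, ContDiff ℝ 1 (fderiv ℝ (fun y => F y k)) := fun k =>
    (hFk k).fderiv_right (by norm_num)
  -- g k i : y ↦ ∂ᵢ Fₖ (y)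
  set g : Fin 2 → Fin 2 → (Fin 2 → ℝ) → ℝ :=
    fun k i y => fderiv ℝ (fun z => F z k) y (e i) with hg
  have hgdiff : ∀ k i, Differentiable ℝ (g k i) := by
    intro k i
    have : g k i = (fun L : (Fin 2 → ℝ) →L[ℝ] ℝ => L (e i)) ∘ fderiv ℝ (fun z => F z k) := rfl
    rw [this]
    exact ((ContinuousLinearMap.apply ℝ ℝ (e i)).differentiable).comp
      ((hdFk k).differentiable (by norm_num))
  have hgfderiv : ∀ k i (w : Fin 2 → ℝ), fderiv ℝ (g k i) x w
      = fderiv ℝ (fderiv ℝ (fun z => F z k)) x w (e i) := by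
    intro k i w
    have h1 : HasFDerivAt (g k i)
        ((ContinuousLinearMap.apply ℝ ℝ (e i)).comp
          (fderiv ℝ (fderiv ℝ (fun z => F z k)) x)) x :=
      (ContinuousLinearMap.apply ℝ ℝ (e i)).hasFDerivAt.comp x
        (((hdFk k).differentiable (by norm_num)) x).hasFDerivAt
    rw [h1.fderiv]; rfl
  -- symmetry of second derivatives
  have hsymm : ∀ k : Fin 2, fderiv ℝ (fderiv ℝ (fun z => F z k)) x (e 0) (e 1)
      = fderiv ℝ (fderiv ℝ (fun z => F z k)) x (e 1) (e 0) := by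
    intro k
    exact ((hFk k).contDiffAt.isSymmSndFDerivAt (by norm_num)) (e 0) (e 1)
  -- h k : y ↦ uₖ (F y)
  set h : Fin 2 → (Fin 2 → ℝ) → ℝ := fun k y => u (F y) k with hh
  have hhdiff : ∀ k, Differentiable ℝ (h k) := by
    intro k
    have : h k = (fun z => u z k) ∘ F := rfl
    rw [this]
    exact ((ContinuousLinearMap.proj k :
      ((Fin 2 → ℝ)) →L[ℝ] ℝ).differentiable.comp hud).comp hFd
  -- entries
  set A : Fin 2 → Fin 2 → ℝ := fun k i => fderiv ℝ F x (e i) k with hA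
  set B : Fin 2 → Fin 2 → ℝ := fun k m => fderiv ℝ (fun z => u z k) (F x) (e m) with hB
  have hhfderiv : ∀ k j, fderiv ℝ (h k) x (e j) = A 0 j * B k 0 + A 1 j * B k 1 := by
    intro k j
    have hcomp : HasFDerivAt (h k)
        ((fderiv ℝ (fun z => u z k) (F x)).comp (fderiv ℝ F x)) x := by
      have h1 : HasFDerivAt (fun z => u z k) (fderiv ℝ (fun z => u z k) (F x)) (F x) := by
        exact (((ContinuousLinearMap.proj k :
          ((Fin 2 → ℝ)) →L[ℝ] ℝ).differentiable.comp hud) (F x)).hasFDerivAt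
      exact h1.comp x (hFd x).hasFDerivAt
    rw [hcomp.fderiv]
    have := clm_eval_fin2 (fderiv ℝ (fun z => u z k) (F x)) (fderiv ℝ F x (e j))
    simpa [hA, hB] using this
  -- the coordinates of uhat
  have huhat' : ∀ i : Fin 2, (fun y => uhat y i)
      = fun y => g 0 i y * h 0 y + g 1 i y * h 1 y := by
    intro i
    funext y
    rw [huhat y]
    simp [jacobian2, Matrix.mulVec, dotProduct, Fin.sum_univ_two, hg, hh,
      fderiv_coord (hFd y), mul_comm, he]
  -- derivative of uhat coordinates
  have key : ∀ i j : Fin 2, fderiv ℝ (fun y => uhat y i) x (e j)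
      = fderiv ℝ (fderiv ℝ (fun z => F z 0)) x (e j) (e i) * u (F x) 0
        + A 0 i * (A 0 j * B 0 0 + A 1 j * B 0 1)
        + (fderiv ℝ (fderiv ℝ (fun z => F z 1)) x (e j) (e i) * u (F x) 1
        + A 1 i * (A 0 j * B 1 0 + A 1 j * B 1 1)) := by
    intro i j
    rw [huhat' i]
    have h0 : HasFDerivAt (fun y => g 0 i y * h 0 y)
        (g 0 i x • fderiv ℝ (h 0) x + h 0 x • fderiv ℝ (g 0 i) x) x :=
      ((hgdiff 0 i) x).hasFDerivAt.mul ((hhdiff 0) x).hasFDerivAt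
    have h1 : HasFDerivAt (fun y => g 1 i y * h 1 y)
        (g 1 i x • fderiv ℝ (h 1) x + h 1 x • fderiv ℝ (g 1 i) x) x :=
      ((hgdiff 1 i) x).hasFDerivAt.mul ((hhdiff 1) x).hasFDerivAt
    have hsum : HasFDerivAt (fun y => g 0 i y * h 0 y + g 1 i y * h 1 y) _ x := h0.add h1
    rw [hsum.fderiv]
    simp only [ContinuousLinearMap.add_apply, ContinuousLinearMap.smul_apply, smul_eq_mul]
    rw [hhfderiv 0 j, hhfderiv 1 j, hgfderiv 0 i (e j), hgfderiv 1 i (e j)]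
    have hgA : ∀ k i, g k i x = A k i := by
      intro k i; simp [hg, hA, fderiv_coord (hFd x)]
    rw [hgA, hgA]
    simp [hh]; ring
  -- assemble
  have hcurl : scalarCurl uhat x = (jacobian2 F x).det * scalarCurl u (F x) := by
    have e0 : (Pi.single 0 1 : Fin 2 → ℝ) = e 0 := rfl
    have e1 : (Pi.single 1 1 : Fin 2 → ℝ) = e 1 := rfl
    rw [scalarCurl, scalarCurl, e0, e1, key 1 0, key 0 1]
    have hdetA : (jacobian2 F x).det = A 0 0 * A 1 1 - A 0 1 * A 1 0 := by
      rw [Matrix.det_fin_two]; simp [jacobian2, hA, he]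
    have hBcurl : ∀ k m, fderiv ℝ (fun y => u y k) (F x) (e m) = B k m := fun k m => rfl
    rw [hBcurl 1 0, hBcurl 0 1, hdetA, hsymm 0, hsymm 1]
    ring
  have hd := hdet x
  rw [hcurl]
  field_simp
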